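/- Let H be a finite group that is not solvable. Then the restricted wreath product G = H ≀ ℤ is not virtually solvable (every subgroup of finite index in G fails to be solvable), and yet G satisfies a non-trivial law: for all x, y ∈ G, the commutator ⁅x, y⁆ raised to the power |H| equals the identity. -/

import Mathlib

/-- The restricted direct product `Π₀ i : ℤ, H`: the subgroup of `ℤ → H`
consisting of the finitely supported functions (pointwise multiplication). -/
def RestrictedDirectProductZ (H : Type*) [Group H] : Subgroup (ℤ → H) where
  carrier := {f | (Function.mulSupport f).Finite}
  one_mem' := by simp [Function.mulSupport_one]
  mul_mem' := by
    intro f g hf hg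
    exact ((hf.union hg).subset (Function.mulSupport_mul f g))
  inv_mem' := by
    intro f hf
    simpa [Function.mulSupport_inv] using hf

/-- The shift automorphism of the restricted product: `(n • f) i = f (i - n)`. -/
def shiftAut (H : Type*) [Group H] (n : ℤ) : MulAut (RestrictedDirectProductZ H) where
  toFun f := ⟨fun i => (f : ℤ → H) (i - n), by
    refine (f.2.image (· + n)).subset ?_
    intro i hi
    exact ⟨i - n, hi, by ring⟩⟩
  invFun f := ⟨fun i => (f : ℤ → H) (i + n), by
    refine (f.2.image (· - n)).subset ?_
    intro i hi
    exact ⟨i + n, hi, by ring⟩⟩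
  left_inv f := by ext i; simp
  right_inv f := by ext i; simp
  map_mul' f g := by ext i; rfl

/-- The action of `ℤ` (as `Multiplicative ℤ`) on the restricted product by shift
automorphisms. -/
def shiftHom (H : Type*) [Group H] :
    Multiplicative ℤ →* MulAut (RestrictedDirectProductZ H) where
  toFun n := shiftAut H n.toAdd
  map_one' := by
    ext f i
    show (f : ℤ → H) (i - 0) = (f : ℤ → H) i
    rw [sub_zero]
  map_mul' m n := by
    ext f i
    show (f : ℤ → H) (i - (m.toAdd + n.toAdd)) = (f : ℤ → H) (i - m.toAdd - n.toAdd)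
    rw [sub_sub]

/-- The restricted wreath product `H ≀ ℤ`, as the semidirect product of the
restricted direct product `Π₀ i : ℤ, H` with `ℤ` acting by shifts. -/
abbrev WreathProductZ (H : Type*) [Group H] :=
  RestrictedDirectProductZ H ⋊[shiftHom H] Multiplicative ℤ

open scoped commutatorElement

section Aux

open SemidirectProduct Multiplicative

variable {H : Type*} [Group H]

/-- The element of the restricted product supported at `j` with value `a`. -/
def delta (j : ℤ) (a : H) : RestrictedDirectProductZ H :=
  ⟨fun i => if i = j then a else 1, Set.Finite.subset (Set.finite_singleton j) (by
    intro i hi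
    simp only [Function.mem_mulSupport] at hi
    by_contra h
    simp only [Set.mem_singleton_iff] at h
    exact hi (if_neg h))⟩

@[simp] lemma delta_apply (j i : ℤ) (a : H) :
    (delta j a : ℤ → H) i = if i = j then a else 1 := rfl

lemma delta_one (j : ℤ) : (delta j (1 : H)) = 1 := by
  apply Subtype.ext; funext i; simp [delta]

lemma delta_mul (j : ℤ) (a b : H) : delta j a * delta j b = delta j (a * b) := by
  apply Subtype.ext; funext i
  simp only [Subgroup.coe_mul, Pi.mul_apply, delta_apply]
  split_ifs <;> simp

lemma delta_inv (j : ℤ) (a : H) : (delta j a)⁻¹ = delta j a⁻¹ := by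
  apply Subtype.ext; funext i
  simp only [Subgroup.coe_inv, Pi.inv_apply, delta_apply]
  split_ifs <;> simp

lemma shift_delta (k j : ℤ) (a : H) : shiftAut H k (delta j a) = delta (j + k) a := by
  apply Subtype.ext; funext i
  show (if i - k = j then a else 1) = (if i = j + k then a else 1)
  exact if_congr sub_eq_iff_eq_add rfl rfl

lemma comm_inl_inr (f : RestrictedDirectProductZ H) (z : Multiplicative ℤ) :
    ⁅(inl f : WreathProductZ H), (inr z : WreathProductZ H)⁆ = inl (f * shiftHom H z f⁻¹) := by
  rw [commutatorElement_def, map_mul, inl_aut, ← map_inv, ← map_inv]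
  group

lemma comm_inl_inr' (k : ℤ) (a : H) :
    ⁅(inl (delta 0 a) : WreathProductZ H), (inr (ofAdd k) : WreathProductZ H)⁆ =
      inl (delta 0 a * delta k a⁻¹) := by
  rw [comm_inl_inr, delta_inv]
  congr 1
  show delta 0 a * shiftAut H ((ofAdd k).toAdd) (delta 0 a⁻¹) = delta 0 a * delta k a⁻¹
  rw [toAdd_ofAdd, shift_delta, zero_add]

lemma key_commutator {k : ℤ} (hk : k ≠ 0) (a b : H) :
    ⁅delta 0 a * delta k a⁻¹, delta 0 b * delta (2 * k) b⁻¹⁆ = delta 0 ⁅a, b⁆ := by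
  have c1 : ¬ ((0 : ℤ) = k) := by omega
  have c2 : ¬ ((0 : ℤ) = 2 * k) := by omega
  have c3 : ¬ (k = 0) := hk
  have c4 : ¬ (k = 2 * k) := by omega
  have c5 : ¬ (2 * k = 0) := by omega
  have c6 : ¬ (2 * k = k) := by omega
  apply Subtype.ext; funext i
  simp only [commutatorElement_def, Subgroup.coe_mul, Subgroup.coe_inv, Pi.mul_apply,
    Pi.inv_apply, delta_apply]
  by_cases hi0 : i = 0
  · subst hi0
    simp [c1, c2]
  · by_cases hik : i = k
    · subst hik
      simp [c3, c4]
    · by_cases hi2k : i = 2 * k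
      · subst hi2k
        simp [c5, c6]
      · simp [hi0, hik, hi2k]

/-- The embedding of `H` at coordinate `0`. -/
def iota : H →* WreathProductZ H where
  toFun a := inl (delta 0 a)
  map_one' := by simp only [delta_one, map_one]
  map_mul' a b := by simp only [← delta_mul, map_mul]

lemma iota_injective : Function.Injective (iota : H →* WreathProductZ H) := by
  intro a b h
  have h2 := inl_injective h
  have h3 := congrFun (congrArg Subtype.val h2) 0
  simpa using h3

lemma pow_card_of_right_eq_one [Finite H] (z : WreathProductZ H) (hz : z.right = 1) :
    z ^ Nat.card H = 1 := by
  obtain ⟨l, r⟩ := z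
  have hr : r = 1 := hz
  subst hr
  have hl : (⟨l, 1⟩ : WreathProductZ H) = inl l := by ext <;> rfl
  rw [hl, ← map_pow]
  have : l ^ Nat.card H = 1 := by
    apply Subtype.ext; funext i
    show ((l ^ Nat.card H : RestrictedDirectProductZ H) : ℤ → H) i = 1
    rw [SubmonoidClass.coe_pow, Pi.pow_apply, pow_card_eq_one']
  rw [this, map_one]

end Aux

open SemidirectProduct Multiplicative in
/-- For a finite non-solvable group `H`, the restricted wreath product `H ≀ ℤ` is
not virtually solvable (no finite-index subgroup is solvable), yet it satisfies the
non-trivial law `⁅x, y⁆ ^ |H| = 1`. -/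
theorem wreath_product_not_virtually_solvable_but_law (H : Type*) [Group H] [Finite H]
    (hH : ¬ IsSolvable H) :
    (∀ G : Subgroup (WreathProductZ H), G.index ≠ 0 → ¬ IsSolvable G) ∧
      (∀ x y : WreathProductZ H, ⁅x, y⁆ ^ (Nat.card H) = 1) := by
  constructor
  · intro G hG hsolv
    haveI : Group.IsSolvable G := hsolv
    haveI : G.FiniteIndex := ⟨hG⟩
    set M := G.normalCore with hMdef
    haveI hMn : M.Normal := G.normalCore_normal
    haveI : M.FiniteIndex := Subgroup.finiteIndex_normalCore G
    haveI : Group.IsSolvable M :=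
      solvable_of_solvable_injective (Subgroup.inclusion_injective G.normalCore_le)
    set q := M.index with hq
    have hq0 : q ≠ 0 := Subgroup.FiniteIndex.index_ne_zero
    have hqz : (q : ℤ) ≠ 0 := Int.natCast_ne_zero.mpr hq0
    have htq : (inr (ofAdd (q : ℤ)) : WreathProductZ H) ∈ M := by
      have h := M.pow_index_mem (inr (ofAdd (1 : ℤ)) : WreathProductZ H)
      rwa [← map_pow, ← ofAdd_nsmul, nsmul_eq_mul, mul_one] at h
    have ht2q : (inr (ofAdd (2 * (q : ℤ))) : WreathProductZ H) ∈ M := by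
      have h := M.mul_mem htq htq
      rw [← map_mul, ← ofAdd_add] at h
      convert h using 3
      ring
    have hcm : ∀ w : WreathProductZ H, ∀ m ∈ M, ⁅w, m⁆ ∈ M := by
      intro w m hm
      rw [commutatorElement_def]
      exact M.mul_mem (hMn.conj_mem m hm w) (M.inv_mem hm)
    have hx : ∀ a : H, (inl (delta 0 a * delta (q : ℤ) a⁻¹) : WreathProductZ H) ∈ M := by
      intro a
      have h := hcm (inl (delta 0 a)) _ htq
      rwa [comm_inl_inr'] at h
    have hy : ∀ b : H,
        (inl (delta 0 b * delta (2 * (q : ℤ)) b⁻¹) : WreathProductZ H) ∈ M := by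
      intro b
      have h := hcm (inl (delta 0 b)) _ ht2q
      rwa [comm_inl_inr'] at h
    have hcomm : ∀ a b : H, iota ⁅a, b⁆ ∈ M := by
      intro a b
      have h : ⁅(inl (delta 0 a * delta (q : ℤ) a⁻¹) : WreathProductZ H),
          inl (delta 0 b * delta (2 * (q : ℤ)) b⁻¹)⁆ ∈ M := by
        rw [commutatorElement_def]
        exact M.mul_mem (M.mul_mem (M.mul_mem (hx a) (hy b)) (M.inv_mem (hx a)))
          (M.inv_mem (hy b))
      rwa [← map_commutatorElement, key_commutator hqz] at h
    have hmap : (commutator H).map iota ≤ M := by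
      rw [commutator_def, Subgroup.map_commutator]
      refine Subgroup.commutator_le.mpr ?_
      rintro g₁ ⟨a, -, rfl⟩ g₂ ⟨b, -, rfl⟩
      rw [← map_commutatorElement]
      exact hcomm a b
    haveI h1 : Group.IsSolvable ((commutator H).map iota) :=
      solvable_of_solvable_injective (Subgroup.inclusion_injective hmap)
    haveI h2 : Group.IsSolvable (commutator H) := by
      let e := Subgroup.equivMapOfInjective (commutator H) iota iota_injective
      exact solvable_of_solvable_injective (f := e.toMonoidHom) e.injective
    have hker : (Abelianization.of : H →* Abelianization H).ker = commutator H := by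
      ext x
      rw [MonoidHom.mem_ker]
      exact QuotientGroup.eq_one_iff x
    exact hH (solvable_of_ker_le_range (commutator H).subtype Abelianization.of
      (by rw [hker, Subgroup.range_subtype]))
  · intro x y
    refine pow_card_of_right_eq_one _ ?_
    have h : SemidirectProduct.rightHom ⁅x, y⁆ =
        ⁅SemidirectProduct.rightHom x, SemidirectProduct.rightHom y⁆ :=
      map_commutatorElement _ _ _
    rw [show (⁅x, y⁆ : WreathProductZ H).right = SemidirectProduct.rightHom ⁅x, y⁆ from rfl, h]
    exact commutatorElement_eq_one_iff_commute.mpr (mul_comm _ _)
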